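/- Let X be a finite linearly ordered set, η ∈ {0,1}^{d+1} a binary string of length d+1, and let 𝒞 be the collection of all subsets B ⊆ X such that there do not exist elements a_0 < a_1 < ⋯ < a_d in X with a_i ∈ B ⟺ η(i) = 1 for all i. Then 𝒞 is d-maximum on X, i.e., for every subset A ⊆ X, |{C ∩ A : C ∈ 𝒞}| = ∑_{i=0}^{min(d,|A|)} (|A| choose i). -/

import Mathlib

open Set

variable {α : Type*}

/-- The trace of a set system on a set `A`. -/
def trace (𝒞 : Set (Set α)) (A : Set α) : Set (Set α) := {s | ∃ C ∈ 𝒞, s = C ∩ A}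

/-- `∑_{i=0}^{d} (n choose i)`. -/
def binLe (n d : ℕ) : ℕ := ∑ i ∈ Finset.range (d + 1), n.choose i

/-- `𝒞` shatters `A`. -/
def shatters (𝒞 : Set (Set α)) (A : Set α) : Prop := ∀ B ⊆ A, ∃ C ∈ 𝒞, C ∩ A = B

/-- `𝒞` is a `d`-maximum set system. -/
def isMaximum (𝒞 : Set (Set α)) (d : ℕ) : Prop :=
  ∀ A : Set α, A.Finite → (trace 𝒞 A).ncard = binLe A.ncard d

/-- There is a ladder of length `n` for `𝒞`. -/
def hasLadder (𝒞 : Set (Set α)) (n : ℕ) : Prop :=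
  ∃ (x : Fin n → α) (B : Fin n → Set α), (∀ j, B j ∈ 𝒞) ∧ ∀ i j, x i ∈ B j ↔ i < j

/-- `B` induces the binary string `μ`. -/
def induces [LinearOrder α] (B : Set α) {m : ℕ} (μ : Fin m → Bool) : Prop :=
  ∃ x : Fin m → α, StrictMono x ∧ ∀ j, x j ∈ B ↔ μ j = true

section Aux

variable [LinearOrder α]

/-- `B` induces `μ` with all witnesses inside `A`. -/
def inducesIn (B A : Set α) {m : ℕ} (μ : Fin m → Bool) : Prop :=
  ∃ x : Fin m → α, StrictMono x ∧ (∀ j, x j ∈ A) ∧ ∀ j, x j ∈ B ↔ μ j = true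

lemma inducesIn_mono {B A A' : Set α} {m : ℕ} {μ : Fin m → Bool} (h : A ⊆ A')
    (hi : inducesIn B A μ) : inducesIn B A' μ := by
  obtain ⟨x, h1, h2, h3⟩ := hi
  exact ⟨x, h1, fun j => h (h2 j), h3⟩

lemma inducesIn_univ {B : Set α} {m : ℕ} {μ : Fin m → Bool} :
    inducesIn B univ μ ↔ induces B μ := by
  constructor
  · rintro ⟨x, h1, _, h3⟩; exact ⟨x, h1, h3⟩
  · rintro ⟨x, h1, h3⟩; exact ⟨x, h1, fun _ => mem_univ _, h3⟩

lemma inducesIn_congr {B B' A : Set α} {m : ℕ} {μ : Fin m → Bool}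
    (h : ∀ b ∈ A, (b ∈ B ↔ b ∈ B')) : inducesIn B A μ ↔ inducesIn B' A μ := by
  constructor <;> rintro ⟨x, h1, h2, h3⟩ <;> refine ⟨x, h1, h2, fun j => ?_⟩
  · rw [← (h _ (h2 j))]; exact h3 j
  · rw [h _ (h2 j)]; exact h3 j

/-- The swap lemma: if both `S` and `S ∪ {x}` induce `μ` with witnesses allowed to use
an extra point `x ∉ A`, then `S` already induces `μ` inside `A`. -/
lemma swap_lemma {m : ℕ} {μ : Fin m → Bool} {A S : Set α} {x : α}
    (hx : x ∉ A) (hS : S ⊆ A)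
    (h1 : inducesIn S (insert x A) μ) (h2 : inducesIn (insert x S) (insert x A) μ) :
    inducesIn S A μ := by
  obtain ⟨u, hu, huA, huS⟩ := h1
  obtain ⟨v, hv, hvA, hvS⟩ := h2
  have hxS : x ∉ S := fun h => hx (hS h)
  by_cases hux : ∀ k, u k ≠ x
  · exact ⟨u, hu, fun j => (mem_insert_iff.mp (huA j)).resolve_left (hux j), huS⟩
  push_neg at hux
  obtain ⟨i, hi⟩ := hux
  have hμi : ¬ (μ i = true) := fun h => hxS (hi ▸ (huS i).mpr h)
  by_cases hvx : ∀ k, v k ≠ x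
  · refine ⟨v, hv, fun j => (mem_insert_iff.mp (hvA j)).resolve_left (hvx j), fun j => ?_⟩
    rw [← hvS j, mem_insert_iff]
    simp [hvx j]
  push_neg at hvx
  obtain ⟨j, hj⟩ := hvx
  have hμj : μ j = true := (hvS j).mp (by rw [hj]; exact mem_insert _ _)
  have hij : i ≠ j := fun h => hμi (h ▸ hμj)
  rcases lt_or_gt_of_ne hij with hlt | hgt
  · -- i < j : use v below position j, u from position j on
    refine ⟨fun k => if k < j then v k else u k, ?_, ?_, ?_⟩
    · intro k1 k2 h12
      dsimp only
      split_ifs with h1j h2j h2j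
      · exact hv h12
      · calc v k1 < v j := hv h1j
          _ = x := hj
          _ = u i := hi.symm
          _ < u k2 := hu (lt_of_lt_of_le hlt (not_lt.mp h2j))
      · exact absurd (h12.trans h2j) h1j
      · exact hu h12
    · intro k
      dsimp only
      split_ifs with hk
      · exact (mem_insert_iff.mp (hvA k)).resolve_left (ne_of_lt (hj ▸ hv hk))
      · have hne : u k ≠ x := by
          intro h
          exact (lt_of_lt_of_le hlt (not_lt.mp hk)).ne' (hu.injective (h.trans hi.symm))
        exact (mem_insert_iff.mp (huA k)).resolve_left hne
    · intro k
      dsimp only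
      split_ifs with hk
      · have hne : v k ≠ x := ne_of_lt (hj ▸ hv hk)
        rw [← hvS k, mem_insert_iff]
        simp [hne]
      · exact huS k
  · -- j < i : use u below position i, v from position i on
    refine ⟨fun k => if k < i then u k else v k, ?_, ?_, ?_⟩
    · intro k1 k2 h12
      dsimp only
      split_ifs with h1i h2i h2i
      · exact hu h12
      · calc u k1 < u i := hu h1i
          _ = x := hi
          _ = v j := hj.symm
          _ < v k2 := hv (lt_of_lt_of_le hgt (not_lt.mp h2i))
      · exact absurd (h12.trans h2i) h1i
      · exact hv h12
    · intro k
      dsimp only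
      split_ifs with hk
      · exact (mem_insert_iff.mp (huA k)).resolve_left (ne_of_lt (hi ▸ hu hk))
      · have hne : v k ≠ x := by
          intro h
          exact (lt_of_lt_of_le hgt (not_lt.mp hk)).ne' (hv.injective (h.trans hj.symm))
        exact (mem_insert_iff.mp (hvA k)).resolve_left hne
    · intro k
      dsimp only
      split_ifs with hk
      · exact huS k
      · have hne : v k ≠ x := by
          intro h
          exact (lt_of_lt_of_le hgt (not_lt.mp hk)).ne' (hv.injective (h.trans hj.symm))
        rw [← hvS k, mem_insert_iff]
        simp [hne]

lemma extend_avoider {m : ℕ} (μ : Fin m → Bool) (G : Finset α) :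
    ∀ (A C : Set α), C ⊆ A → ¬ inducesIn C A μ →
      ∃ D : Set α, D ∩ A = C ∧ D ⊆ A ∪ ↑G ∧ ¬ inducesIn D (A ∪ ↑G) μ := by
  classical
  induction G using Finset.induction_on with
  | empty =>
    intro A C hCA hC
    refine ⟨C, inter_eq_left.mpr hCA, ?_, ?_⟩
    · simpa using hCA
    · simpa using hC
  | @insert a G ha ih =>
    intro A C hCA hC
    obtain ⟨D, hD1, hD2, hD3⟩ := ih A C hCA hC
    have hset : A ∪ ↑(insert a G) = insert a (A ∪ ↑G) := by
      rw [Finset.coe_insert, Set.union_insert]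
    by_cases haU : a ∈ A ∪ ↑G
    · have : A ∪ (↑(insert a G) : Set α) = A ∪ ↑G := by
        rw [hset, insert_eq_self.mpr haU]
      rw [this]
      exact ⟨D, hD1, hD2, hD3⟩
    · have hkey : ¬ (inducesIn D (insert a (A ∪ ↑G)) μ ∧
          inducesIn (insert a D) (insert a (A ∪ ↑G)) μ) := by
        rintro ⟨k1, k2⟩
        exact hD3 (swap_lemma haU hD2 k1 k2)
      rcases not_and_or.mp hkey with h | h
      · refine ⟨D, hD1, ?_, ?_⟩
        · rw [hset]; exact hD2.trans (subset_insert _ _)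
        · rw [hset]; exact h
      · refine ⟨insert a D, ?_, ?_, ?_⟩
        · rw [Set.insert_inter_of_notMem (fun hmem => haU (Or.inl hmem))]
          exact hD1
        · rw [hset]; exact insert_subset_insert hD2
        · rw [hset]; exact h

lemma exists_global_avoider [Fintype α] {m : ℕ} (μ : Fin m → Bool) {A S : Set α}
    (hS : S ⊆ A) (h : ¬ inducesIn S A μ) :
    ∃ C : Set α, C ∩ A = S ∧ ¬ induces C μ := by
  obtain ⟨D, h1, _, h3⟩ := extend_avoider μ Finset.univ A S hS h
  refine ⟨D, h1, ?_⟩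
  rw [← inducesIn_univ]
  have huniv : A ∪ ↑(Finset.univ : Finset α) = univ := by simp
  rwa [huniv] at h3

lemma trace_avoiders_eq [Fintype α] {m : ℕ} (μ : Fin m → Bool) (A : Set α) :
    trace {B : Set α | ¬ induces B μ} A = {S : Set α | S ⊆ A ∧ ¬ inducesIn S A μ} := by
  ext S
  constructor
  · rintro ⟨C, hC, rfl⟩
    refine ⟨inter_subset_right, fun hind => hC ?_⟩
    obtain ⟨x, h1, h2, h3⟩ := hind
    exact ⟨x, h1, fun j => by rw [← h3 j]; exact ⟨fun h => ⟨h, h2 j⟩, fun h => h.1⟩⟩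
  · rintro ⟨hSA, hS⟩
    obtain ⟨C, h1, h2⟩ := exists_global_avoider μ hSA hS
    exact ⟨C, h2, h1.symm⟩

/-! ### Counting lemmas around a maximal element -/

lemma witness_last {m : ℕ} {A : Set α} {a : α} (hmax : ∀ b ∈ A, b ≤ a)
    {x : Fin (m + 1) → α} (hx : StrictMono x) (hxA : ∀ j, x j ∈ A)
    {k : Fin (m + 1)} (hk : x k = a) : k = Fin.last m := by
  by_contra h
  exact absurd hk
    (ne_of_lt (lt_of_lt_of_le (hx (Fin.lt_last_iff_ne_last.mpr h)) (hmax _ (hxA _))))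

lemma snoc_induce {m : ℕ} {μ : Fin (m + 1) → Bool} {S A : Set α} {a : α}
    (haA : a ∈ A) (hmax : ∀ b ∈ A, b ≤ a)
    (haS : a ∈ S ↔ μ (Fin.last m) = true)
    (h : inducesIn S (A \ {a}) (fun j : Fin m => μ j.castSucc)) :
    inducesIn S A μ := by
  obtain ⟨y, h1, h2, h3⟩ := h
  have hya : ∀ j, y j < a := fun j =>
    lt_of_le_of_ne (hmax _ (h2 j).1) (h2 j).2
  refine ⟨Fin.snoc y a, ?_, ?_, ?_⟩
  · intro i j hij
    rcases eq_or_ne j (Fin.last m) with rfl | hj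
    · have hi : i ≠ Fin.last m := ne_of_lt hij
      rw [Fin.snoc_last, ← Fin.castSucc_castPred i hi, Fin.snoc_castSucc]
      exact hya _
    · have hi : i ≠ Fin.last m := ne_of_lt (hij.trans (Fin.lt_last_iff_ne_last.mpr hj))
      rw [← Fin.castSucc_castPred i hi, Fin.snoc_castSucc,
        ← Fin.castSucc_castPred j hj, Fin.snoc_castSucc]
      exact h1 (by rwa [← Fin.castSucc_lt_castSucc_iff, Fin.castSucc_castPred,
        Fin.castSucc_castPred])
  · intro j
    rcases eq_or_ne j (Fin.last m) with rfl | hj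
    · rw [Fin.snoc_last]; exact haA
    · rw [← Fin.castSucc_castPred j hj, Fin.snoc_castSucc]
      exact (h2 _).1
  · intro j
    rcases eq_or_ne j (Fin.last m) with rfl | hj
    · rw [Fin.snoc_last]; exact haS
    · rw [← Fin.castSucc_castPred j hj, Fin.snoc_castSucc]
      exact h3 _
  
lemma induce_destruct {m : ℕ} {μ : Fin (m + 1) → Bool} {S A : Set α} {a : α}
    (hmax : ∀ b ∈ A, b ≤ a) (h : inducesIn S A μ) :
    inducesIn S (A \ {a}) μ ∨
      ((a ∈ S ↔ μ (Fin.last m) = true) ∧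
        inducesIn S (A \ {a}) (fun j : Fin m => μ j.castSucc)) := by
  obtain ⟨x, h1, h2, h3⟩ := h
  by_cases hxa : ∀ k, x k ≠ a
  · exact Or.inl ⟨x, h1, fun j => ⟨h2 j, hxa j⟩, h3⟩
  · right
    push_neg at hxa
    obtain ⟨k, hk⟩ := hxa
    have hkl : k = Fin.last m := witness_last hmax h1 h2 hk
    subst hkl
    refine ⟨by rw [← hk]; exact h3 _, ?_⟩
    refine ⟨x ∘ Fin.castSucc, h1.comp Fin.strictMono_castSucc, fun j => ⟨h2 _, ?_⟩,
      fun j => h3 _⟩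
    have hlt : x j.castSucc < x (Fin.last m) := h1 (Fin.castSucc_lt_last j)
    rw [hk] at hlt
    exact ne_of_lt hlt

lemma prefix_induce {m : ℕ} {μ : Fin (m + 1) → Bool} {S A : Set α}
    (h : inducesIn S A μ) : inducesIn S A (fun j : Fin m => μ j.castSucc) := by
  obtain ⟨x, h1, h2, h3⟩ := h
  exact ⟨x ∘ Fin.castSucc, h1.comp Fin.strictMono_castSucc, fun j => h2 _, fun j => h3 _⟩

/-- Case `a ∉ S`, `μ` ends in `true`. -/
lemma key_notmem_true {m : ℕ} {μ : Fin (m + 1) → Bool} {S A : Set α} {a : α}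
    (haA : a ∈ A) (hmax : ∀ b ∈ A, b ≤ a) (hS : S ⊆ A \ {a})
    (hlast : μ (Fin.last m) = true) :
    inducesIn S A μ ↔ inducesIn S (A \ {a}) μ := by
  constructor
  · intro h
    rcases induce_destruct hmax h with h | ⟨hiff, _⟩
    · exact h
    · exact absurd (hiff.mpr hlast) (fun hmem => (hS hmem).2 rfl)
  · exact inducesIn_mono diff_subset

/-- Case `a ∉ S`, `μ` ends in `false`. -/
lemma key_notmem_false {m : ℕ} {μ : Fin (m + 1) → Bool} {S A : Set α} {a : α}
    (haA : a ∈ A) (hmax : ∀ b ∈ A, b ≤ a) (hS : S ⊆ A \ {a})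
    (hlast : μ (Fin.last m) = false) :
    inducesIn S A μ ↔ inducesIn S (A \ {a}) (fun j : Fin m => μ j.castSucc) := by
  have haS : a ∉ S := fun hmem => (hS hmem).2 rfl
  constructor
  · intro h
    rcases induce_destruct hmax h with h | ⟨_, h⟩
    · exact prefix_induce h
    · exact h
  · intro h
    exact snoc_induce haA hmax (by simp [haS, hlast]) h

/-- Case `a ∈ S`, `μ` ends in `true`. -/
lemma key_mem_true {m : ℕ} {μ : Fin (m + 1) → Bool} {S' A : Set α} {a : α}
    (haA : a ∈ A) (hmax : ∀ b ∈ A, b ≤ a) (hS : S' ⊆ A \ {a})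
    (hlast : μ (Fin.last m) = true) :
    inducesIn (insert a S') A μ ↔ inducesIn S' (A \ {a}) (fun j : Fin m => μ j.castSucc) := by
  have hcongr : ∀ b ∈ A \ {a}, (b ∈ insert a S' ↔ b ∈ S') := by
    intro b hb
    have hba : b ≠ a := by simpa using hb.2
    simp [mem_insert_iff, hba]
  constructor
  · intro h
    rcases induce_destruct hmax h with h | ⟨_, h⟩
    · exact prefix_induce ((inducesIn_congr hcongr).mp h)
    · exact (inducesIn_congr hcongr).mp h
  · intro h
    exact snoc_induce haA hmax (by simp [hlast]) ((inducesIn_congr hcongr).mpr h)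

/-- Case `a ∈ S`, `μ` ends in `false`. -/
lemma key_mem_false {m : ℕ} {μ : Fin (m + 1) → Bool} {S' A : Set α} {a : α}
    (haA : a ∈ A) (hmax : ∀ b ∈ A, b ≤ a) (hS : S' ⊆ A \ {a})
    (hlast : μ (Fin.last m) = false) :
    inducesIn (insert a S') A μ ↔ inducesIn S' (A \ {a}) μ := by
  have hcongr : ∀ b ∈ A \ {a}, (b ∈ insert a S' ↔ b ∈ S') := by
    intro b hb
    have hba : b ≠ a := by simpa using hb.2
    simp [mem_insert_iff, hba]
  constructor
  · intro h
    rcases induce_destruct hmax h with h | ⟨hiff, _⟩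
    · exact (inducesIn_congr hcongr).mp h
    · simp [hlast] at hiff
    -- hiff : a ∈ insert a S' ↔ false : contradiction
  · intro h
    exact inducesIn_mono diff_subset ((inducesIn_congr hcongr).mpr h)

lemma sum_choose_succ (k m : ℕ) :
    ∑ i ∈ Finset.range (m + 1), (k + 1).choose i
      = ∑ i ∈ Finset.range (m + 1), k.choose i + ∑ i ∈ Finset.range m, k.choose i := by
  induction m with
  | zero => simp
  | succ m ih =>
    rw [Finset.sum_range_succ, ih, Nat.choose_succ_succ,
      Finset.sum_range_succ k.choose (m + 1), Finset.sum_range_succ k.choose m]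
    ring

lemma count_avoiders (n : ℕ) : ∀ (m : ℕ) (μ : Fin m → Bool) (A : Set α),
    A.Finite → A.ncard = n →
    {S : Set α | S ⊆ A ∧ ¬ inducesIn S A μ}.ncard = ∑ i ∈ Finset.range m, n.choose i := by
  induction n using Nat.strong_induction_on with
  | _ n ih =>
  intro m μ A hA hn
  cases m with
  | zero =>
    have he : {S : Set α | S ⊆ A ∧ ¬ inducesIn S A μ} = ∅ := by
      ext S
      simp only [mem_setOf_eq, mem_empty_iff_false, iff_false, not_and, not_not]
      intro _
      exact ⟨Fin.elim0, fun i => i.elim0, fun i => i.elim0, fun i => i.elim0⟩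
    rw [he]
    simp
  | succ m' =>
  rcases eq_or_ne n 0 with rfl | hn0
  · have hAe : A = ∅ := (Set.ncard_eq_zero hA).mp hn
    subst hAe
    have he : {S : Set α | S ⊆ (∅ : Set α) ∧ ¬ inducesIn S ∅ μ} = {∅} := by
      ext S
      simp only [mem_setOf_eq, subset_empty_iff, mem_singleton_iff]
      constructor
      · rintro ⟨rfl, _⟩; rfl
      · rintro rfl
        refine ⟨rfl, ?_⟩
        rintro ⟨x, _, h2, _⟩
        exact h2 0
    rw [he, ncard_singleton, Finset.sum_range_succ']
    simp [Nat.choose_zero_succ]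
  · obtain ⟨n', rfl⟩ : ∃ n', n = n' + 1 := ⟨n - 1, by omega⟩
    have hAne : A.Nonempty := nonempty_of_ncard_ne_zero (by omega)
    obtain ⟨a, haA, hmax⟩ := Set.exists_max_image A id hA hAne
    simp only [id] at hmax
    set A' := A \ {a} with hA'def
    have hA' : A'.Finite := hA.diff
    have hA'card : A'.ncard = n' := by
      rw [hA'def, Set.ncard_diff_singleton_of_mem haA, hn]
      omega
    -- the three collections
    set P : Set (Set α) := {S : Set α | S ⊆ A ∧ ¬ inducesIn S A μ} with hP
    set P0 : Set (Set α) := {S : Set α | (S ⊆ A ∧ ¬ inducesIn S A μ) ∧ a ∉ S} with hP0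
    set P1 : Set (Set α) := {S : Set α | (S ⊆ A ∧ ¬ inducesIn S A μ) ∧ a ∈ S} with hP1
    have hPfin : P.Finite := hA.finite_subsets.subset (fun S hS => hS.1)
    have hP0fin : P0.Finite := hPfin.subset (fun S hS => hS.1)
    have hP1fin : P1.Finite := hPfin.subset (fun S hS => hS.1)
    have hunion : P = P0 ∪ P1 := by
      ext S
      by_cases haS : a ∈ S <;> simp [hP, hP0, hP1, haS]
    have hdisj : Disjoint P0 P1 := by
      rw [Set.disjoint_left]
      rintro S hS0 hS1
      exact hS0.2 hS1.2
    have hsub_iff : ∀ S : Set α, (S ⊆ A ∧ a ∉ S) ↔ S ⊆ A' := by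
      intro S
      constructor
      · rintro ⟨h1, h2⟩ b hb
        exact ⟨h1 hb, fun he => h2 (he ▸ hb)⟩
      · intro h
        exact ⟨fun b hb => (h hb).1, fun hb => (h hb).2 rfl⟩
    -- the two target collections on A'
    set Q1 : Set (Set α) := {S : Set α | S ⊆ A' ∧ ¬ inducesIn S A' μ} with hQ1
    set Q2 : Set (Set α) :=
      {S : Set α | S ⊆ A' ∧ ¬ inducesIn S A' (fun j : Fin m' => μ j.castSucc)} with hQ2
    -- cardinality of the a-part via the map S ↦ S \ {a}
    have himage : ∀ (k : ℕ) (ν : Fin k → Bool) (R : Set (Set α)),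
        (R = {S : Set α | S ⊆ A' ∧ ¬ inducesIn S A' ν}) →
        (∀ S' : Set α, S' ⊆ A' →
          (inducesIn (insert a S') A μ ↔ inducesIn S' A' ν)) →
        P1.ncard = R.ncard := by
      intro k ν R hR hiff
      have hmap : (fun S : Set α => S \ {a}) '' P1 = R := by
        ext S'
        constructor
        · rintro ⟨S, ⟨⟨hSA, hSind⟩, haS⟩, rfl⟩
          have hsub : S \ {a} ⊆ A' := fun b hb => ⟨hSA hb.1, hb.2⟩
          have hins : insert a (S \ {a}) = S := by
            rw [Set.insert_diff_singleton, insert_eq_self.mpr haS]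
          rw [hR]
          refine ⟨hsub, fun h => hSind ?_⟩
          rw [← hins]
          exact (hiff _ hsub).mpr h
        · intro hS'
          rw [hR] at hS'
          obtain ⟨hS'A, hS'ind⟩ := hS'
          have haS' : a ∉ S' := fun h => (hS'A h).2 rfl
          refine ⟨insert a S', ⟨⟨?_, ?_⟩, mem_insert _ _⟩, ?_⟩
          · exact insert_subset haA (hS'A.trans diff_subset)
          · intro h
            exact hS'ind ((hiff _ hS'A).mp h)
          · show insert a S' \ {a} = S'
            rw [Set.insert_diff_self_of_notMem haS']
      have hinj : Set.InjOn (fun S : Set α => S \ {a}) P1 := by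
        rintro S1 hS1 S2 hS2 h
        have e1 : insert a (S1 \ {a}) = S1 := by
          rw [Set.insert_diff_singleton, insert_eq_self.mpr hS1.2]
        have e2 : insert a (S2 \ {a}) = S2 := by
          rw [Set.insert_diff_singleton, insert_eq_self.mpr hS2.2]
        dsimp only at h
        rw [← e1, ← e2, h]
      rw [← hmap, Set.ncard_image_of_injOn hinj]
    -- Compute ncards of the two parts depending on the last bit of μ
    have hQ1card : Q1.ncard = ∑ i ∈ Finset.range (m' + 1), n'.choose i :=
      ih n' (by omega) (m' + 1) μ A' hA' hA'card
    have hQ2card : Q2.ncard = ∑ i ∈ Finset.range m', n'.choose i :=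
      ih n' (by omega) m' _ A' hA' hA'card
    have hsplit : P.ncard = P0.ncard + P1.ncard := by
      rw [hunion]
      exact Set.ncard_union_eq hdisj hP0fin hP1fin
    have htotal : P.ncard = Q1.ncard + Q2.ncard := by
      cases hlast : μ (Fin.last m') with
      | true =>
        have h0 : P0 = Q1 := by
          ext S
          simp only [hP0, hQ1, mem_setOf_eq]
          constructor
          · rintro ⟨⟨h1, h2⟩, h3⟩
            have hsub : S ⊆ A' := (hsub_iff S).mp ⟨h1, h3⟩
            exact ⟨hsub, fun h => h2 ((key_notmem_true haA hmax hsub hlast).mpr h)⟩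
          · rintro ⟨h1, h2⟩
            obtain ⟨h3, h4⟩ := (hsub_iff S).mpr h1
            exact ⟨⟨h3, fun h => h2 ((key_notmem_true haA hmax h1 hlast).mp h)⟩, h4⟩
        have h1 : P1.ncard = Q2.ncard :=
          himage _ _ Q2 rfl (fun S' hS' => by
            rw [hA'def] at hS' ⊢
            exact key_mem_true haA hmax hS' hlast)
        rw [hsplit, h0, h1]
      | false =>
        have h0 : P0 = Q2 := by
          ext S
          simp only [hP0, hQ2, mem_setOf_eq]
          constructor
          · rintro ⟨⟨h1, h2⟩, h3⟩
            have hsub : S ⊆ A' := (hsub_iff S).mp ⟨h1, h3⟩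
            exact ⟨hsub, fun h => h2 ((key_notmem_false haA hmax hsub hlast).mpr h)⟩
          · rintro ⟨h1, h2⟩
            obtain ⟨h3, h4⟩ := (hsub_iff S).mpr h1
            exact ⟨⟨h3, fun h => h2 ((key_notmem_false haA hmax h1 hlast).mp h)⟩, h4⟩
        have h1 : P1.ncard = Q1.ncard :=
          himage _ _ Q1 rfl (fun S' hS' => by
            rw [hA'def] at hS' ⊢
            exact key_mem_false haA hmax hS' hlast)
        rw [hsplit, h0, h1]
        ring
    rw [htotal, hQ1card, hQ2card, sum_choose_succ]

end Aux

/-- On a finite linear order, the family of sets avoiding a fixed pattern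
`η ∈ 2^{d+1}` is `d`-maximum. -/
theorem avoiders_isMaximum [LinearOrder α] [Fintype α] (d : ℕ) (η : Fin (d + 1) → Bool) :
    ∀ A : Set α, (trace {B : Set α | ¬ induces B η} A).ncard = binLe A.ncard d := by
  intro A
  rw [trace_avoiders_eq η A, binLe]
  exact count_avoiders A.ncard (d + 1) η A (Set.toFinite A) rfl
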